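/- Let n ≥ 1 and let R = ℂ[x₁,…,x_n]. Let φ^{(1)},…,φ^{(n)} ∈ Mat_{2×2}(R) be pairwise commuting matrices with φ^{(h)}_{11} = 0 for every h, with φ^{(1)} ≠ 0, and such that for every nonzero φ^{(h)} every common divisor of its four entries is a unit of R. If det φ^{(1)} = 0 and φ^{(1)}_{12} ≠ 0 (hence φ^{(1)}_{21} = 0), then ∑_{h=1}^n I_{φ^{(h)}} is the principal ideal of R[z₁,z₂] generated by z₂ (φ^{(1)}_{22} z₁ − φ^{(1)}_{12} z₂). -/

import Mathlib

open MvPolynomial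

/-- The ideal `I_M` of `R[z₁,z₂]` generated by
`M_{21} z₁² + (M_{22} − M_{11}) z₁z₂ − M_{12} z₂² = ∑ₖ z_k (M_{2k} z₁ − M_{1k} z₂)`. -/
noncomputable def higgsIdeal {R : Type*} [CommRing R]
    (M : Matrix (Fin 2) (Fin 2) R) : Ideal (MvPolynomial (Fin 2) R) :=
  Ideal.span { p | ∃ i j : Fin 2, i < j ∧
    p = ∑ k : Fin 2, X k * (C (M j k) * X i - C (M i k) * X j) }

theorem higgsIdeal_eq {R : Type*} [CommRing R] (M : Matrix (Fin 2) (Fin 2) R) :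
    higgsIdeal M = Ideal.span
      {∑ k : Fin 2, X k * (C (M 1 k) * X 0 - C (M 0 k) * X 1)} := by
  unfold higgsIdeal
  congr 1
  ext p
  constructor
  · rintro ⟨i, j, hij, rfl⟩
    fin_cases i <;> fin_cases j <;> simp_all
  · rintro rfl
    exact ⟨0, 1, by norm_num, rfl⟩

theorem mem_ideal_sum_of_mem {R ι : Type*} [CommRing R] [Fintype ι]
    (f : ι → Ideal R) (i : ι) {x : R} (hx : x ∈ f i) : x ∈ ∑ j, f j :=
  (Finset.single_le_sum (f := f) (fun j _ => bot_le) (Finset.mem_univ i)) hx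

set_option maxHeartbeats 1000000 in
/-- Proposition 5.2, case `det φ⁽¹⁾ = 0`: for pairwise commuting `2×2` Higgs-field
matrices over `ℂ[x₁,…,x_n]` with vanishing `(1,1)`-entries, primitive entries, and
`φ⁽¹⁾ ≠ 0` with `det φ⁽¹⁾ = 0` and `φ⁽¹⁾₁₂ ≠ 0` (hence `φ⁽¹⁾₂₁ = 0`), the ideal
`∑ₕ I_{φ⁽ʰ⁾}` is principal, generated by `z₂ (φ⁽¹⁾₂₂ z₁ − φ⁽¹⁾₁₂ z₂)`. -/
theorem stmt13 (n : ℕ) (hn : 1 ≤ n)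
    (φ : Fin n → Matrix (Fin 2) (Fin 2) (MvPolynomial (Fin n) ℂ))
    (hcomm : ∀ h h', Commute (φ h) (φ h'))
    (h11 : ∀ h, φ h 0 0 = 0)
    (hφ1 : φ ⟨0, hn⟩ ≠ 0)
    (hgcd : ∀ h, φ h ≠ 0 → ∀ g : MvPolynomial (Fin n) ℂ,
      (∀ i j : Fin 2, g ∣ φ h i j) → IsUnit g)
    (hdet : (φ ⟨0, hn⟩).det = 0) (h12 : φ ⟨0, hn⟩ 0 1 ≠ 0) :
    φ ⟨0, hn⟩ 1 0 = 0 ∧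
    (∑ h, higgsIdeal (φ h)) =
      Ideal.span {X 1 * (C (φ ⟨0, hn⟩ 1 1) * X 0 - C (φ ⟨0, hn⟩ 0 1) * X 1)} := by
  set b := φ ⟨0, hn⟩ 0 1 with hbdef
  set d := φ ⟨0, hn⟩ 1 1 with hddef
  have h10 : φ ⟨0, hn⟩ 1 0 = 0 := by
    rw [Matrix.det_fin_two, h11] at hdet
    have hb0 : b * φ ⟨0, hn⟩ 1 0 = 0 := by linear_combination -hdet
    rcases mul_eq_zero.1 hb0 with h | h
    · exact absurd h h12
    · exact h
  refine ⟨h10, ?_⟩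
  have hrel : IsRelPrime b d := by
    intro g hgb hgd
    refine hgcd ⟨0, hn⟩ hφ1 g ?_
    intro i j
    fin_cases i <;> fin_cases j <;> simp [h11, h10, hgb, hgd, ← hbdef, ← hddef]
  have key : ∀ h, φ h 1 0 = 0 ∧ ∃ g, φ h 0 1 = g * b ∧ φ h 1 1 = g * d := by
    intro h
    have hcom := (hcomm ⟨0, hn⟩ h).eq
    have e00 := congrFun (congrFun hcom 0) 0
    have e01 := congrFun (congrFun hcom 0) 1
    simp [Matrix.mul_apply, Fin.sum_univ_two, h11, h10, ← hbdef, ← hddef] at e00 e01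
    have hC : φ h 1 0 = 0 := e00.resolve_left h12
    have hdvd : b ∣ φ h 0 1 * d := ⟨φ h 1 1, by linear_combination -e01⟩
    obtain ⟨g, hg⟩ := hrel.dvd_of_dvd_mul_right hdvd
    refine ⟨hC, g, by rw [hg]; ring, ?_⟩
    have : b * φ h 1 1 = b * (g * d) := by rw [e01, hg]; ring
    exact mul_left_cancel₀ h12 this
  set J : Ideal (MvPolynomial (Fin 2) (MvPolynomial (Fin n) ℂ)) :=
    Ideal.span {X 1 * (C d * X 0 - C b * X 1)} with hJ
  refine le_antisymm ?_ ?_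
  · refine Finset.sum_induction _ (fun I => I ≤ J)
      (fun a c ha hc => (Submodule.add_eq_sup (p := a) (q := c)) ▸ sup_le ha hc)
      bot_le ?_
    intro h _
    obtain ⟨hC, g, hB, hD⟩ := key h
    rw [higgsIdeal_eq, Ideal.span_le, Set.singleton_subset_iff]
    refine Ideal.mem_span_singleton.2 ⟨C g, ?_⟩
    simp only [Fin.sum_univ_two, h11 h, hC, hB, hD, map_mul, map_zero]
    ring
  · rw [Ideal.span_le, Set.singleton_subset_iff]
    have hmem : (X 1 * (C d * X 0 - C b * X 1) : MvPolynomial (Fin 2) (MvPolynomial (Fin n) ℂ))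
        ∈ higgsIdeal (φ ⟨0, hn⟩) := by
      rw [higgsIdeal_eq]
      have heq : (∑ k : Fin 2, X k * (C (φ ⟨0, hn⟩ 1 k) * X 0 - C (φ ⟨0, hn⟩ 0 k) * X 1))
          = X 1 * (C d * X 0 - C b * X 1) := by
        simp [Fin.sum_univ_two, h11, h10, ← hbdef, ← hddef]
      rw [← heq]
      exact Ideal.subset_span rfl
    exact mem_ideal_sum_of_mem (fun h => higgsIdeal (φ h)) ⟨0, hn⟩ hmem
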